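/- arXiv:1502.05570 — 4 statements merged into one kernel-verified Lean document; each statement's English description precedes it below -/
import Mathlib

section
/- Let n ≥ 0 and 0 ≤ i ≤ n be natural numbers, and define the polynomial P_{n,i}(x) := ((2i)!!/(2i−1)!!) · 4^{−n} · C(n,i)^{−1} · Σ_{j=0}^{n−i} 4^j · C(i+j,i) · C(2i+2j,i+j) · C(2n−2i−2j,n−i−j) · (x−1/2)^{2j}. Then P_{n,i}(0) = 1 and, for every real x ∉ {0, 1/2, 1}, P_{n,i} satisfies the Heun differential equation P″(x) + ( (i+1)/x + (i+1)/(x−1) + (2i−2n)/(x−1/2) ) · P′(x) + ( 2(i−n)(2i+1)·x − (i−n)(2i+1) ) / ( x(x−1)(x−1/2) ) · P(x) = 0. -/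
open scoped Nat

/-- The polynomial `P_{n,i}` from (3.14): the polynomial form of the Heun function
`Hl(1/2, (i−n)(2i+1); 2(i−n), 2i+1; i+1, i+1; x)`. -/
noncomputable def heunPoly (n i : ℕ) (x : ℝ) : ℝ :=
  ((Nat.doubleFactorial (2 * i) : ℝ) / (Nat.doubleFactorial (2 * i - 1) : ℝ)) *
    ((4 : ℝ) ^ n)⁻¹ * ((n.choose i : ℝ))⁻¹ *
    ∑ j ∈ Finset.range (n - i + 1),
      4 ^ j * ((i + j).choose i : ℝ) * ((2 * i + 2 * j).choose (i + j) : ℝ) *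
        ((2 * n - 2 * i - 2 * j).choose (n - i - j) : ℝ) * (x - 1 / 2) ^ (2 * j)

/-! ### Auxiliary combinatorial sequences -/

def eC (i j : ℕ) : ℕ := (i + j).choose i * ((2*i + 2*j).choose (i+j))
def gC (k : ℕ) : ℕ := (2*k).choose k
def uS (i m : ℕ) : ℕ := ∑ j ∈ Finset.range (m+1), eC i j * gC (m-j)

lemma gC_succ (k : ℕ) : (k+1) * gC (k+1) = 2*(2*k+1) * gC k := by
  have := Nat.succ_mul_centralBinom_succ k
  simpa [gC, Nat.centralBinom] using this

lemma cchoose (i j : ℕ) : (j+1) * ((i+j+1).choose i) = (i+j+1) * ((i+j).choose i) := by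
  have h1 : (i+j+1).choose i = (i+j+1).choose (j+1) := by
    rw [← Nat.choose_symm (by omega : i ≤ i+j+1)]; congr 1; omega
  have h2 : (i+j).choose i = (i+j).choose j := by
    rw [← Nat.choose_symm (by omega : i ≤ i+j)]; congr 1; omega
  have h := Nat.add_one_mul_choose_eq (i+j) j
  rw [h1, h2, h]
  ring

lemma eC_succ (i j : ℕ) : (j+1) * eC i (j+1) = 2*(2*i+2*j+1) * eC i j := by
  unfold eC
  have h1 := cchoose i j
  have h2 : (i+j+1) * ((2*(i+j)+2).choose (i+j+1)) = 2*(2*(i+j)+1) * ((2*(i+j)).choose (i+j)) := by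
    have := gC_succ (i+j); rw [show 2*(i+j)+2 = 2*(i+j+1) by ring]; simpa [gC] using this
  have e1 : i + (j+1) = i + j + 1 := by omega
  have e2 : 2*i + 2*(j+1) = 2*(i+j)+2 := by omega
  have e3 : 2*i + 2*j = 2*(i+j) := by omega
  rw [e1, e2, e3]
  calc (j+1) * ((i+j+1).choose i * ((2*(i+j)+2).choose (i+j+1)))
      = ((j+1) * ((i+j+1).choose i)) * ((2*(i+j)+2).choose (i+j+1)) := by ring
    _ = ((i+j+1) * ((i+j).choose i)) * ((2*(i+j)+2).choose (i+j+1)) := by rw [h1]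
    _ = ((i+j).choose i) * ((i+j+1) * ((2*(i+j)+2).choose (i+j+1))) := by ring
    _ = ((i+j).choose i) * (2*(2*(i+j)+1) * ((2*(i+j)).choose (i+j))) := by rw [h2]
    _ = 2*(2*(i+j)+1) * ((i+j).choose i * ((2*(i+j)).choose (i+j))) := by ring

lemma uS_rec (i m : ℕ) : (m+1) * uS i (m+1) = (4*(m+i+1)) * uS i m := by
  have split : (m+1) * uS i (m+1)
      = (∑ j ∈ Finset.range (m+2), j * (eC i j * gC (m+1-j)))
        + (∑ j ∈ Finset.range (m+2), (m+1-j) * (eC i j * gC (m+1-j))) := by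
    rw [uS, Finset.mul_sum, ← Finset.sum_add_distrib]
    refine Finset.sum_congr rfl fun j hj => ?_
    obtain ⟨d, hd⟩ : ∃ d, m+1-j = d := ⟨_, rfl⟩
    have h : m+1 = j + d := by
      have := Finset.mem_range.mp hj; omega
    rw [hd, h, Nat.add_mul]
  have first : (∑ j ∈ Finset.range (m+2), j * (eC i j * gC (m+1-j)))
      = ∑ j ∈ Finset.range (m+1), 2*(2*i+2*j+1) * (eC i j * gC (m-j)) := by
    rw [Finset.sum_range_succ' (fun j => j * (eC i j * gC (m+1-j))) (m+1)]
    simp only [Nat.zero_mul, add_zero]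
    refine Finset.sum_congr rfl fun j hj => ?_
    have h1 : m + 1 - (j+1) = m - j := by omega
    rw [h1, ← mul_assoc, eC_succ, mul_assoc]
  have second : (∑ j ∈ Finset.range (m+2), (m+1-j) * (eC i j * gC (m+1-j)))
      = ∑ j ∈ Finset.range (m+1), 2*(2*(m-j)+1) * (eC i j * gC (m-j)) := by
    rw [Finset.sum_range_succ]
    simp only [Nat.sub_self, Nat.zero_mul, add_zero]
    refine Finset.sum_congr rfl fun j hj => ?_
    have hj' : j ≤ m := Nat.lt_succ_iff.mp (Finset.mem_range.mp hj)
    have h1 : m + 1 - j = (m-j) + 1 := by omega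
    rw [h1]
    calc ((m-j)+1) * (eC i j * gC ((m-j)+1))
        = eC i j * (((m-j)+1) * gC ((m-j)+1)) := by ring
      _ = eC i j * (2*(2*(m-j)+1) * gC (m-j)) := by rw [gC_succ]
      _ = 2*(2*(m-j)+1) * (eC i j * gC (m-j)) := by ring
  rw [split, first, second, ← Finset.sum_add_distrib, uS, Finset.mul_sum]
  refine Finset.sum_congr rfl fun j hj => ?_
  have hj' : j ≤ m := Nat.lt_succ_iff.mp (Finset.mem_range.mp hj)
  have h : 2*(2*i+2*j+1) + 2*(2*(m-j)+1) = 4*(m+i+1) := by omega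
  rw [← Nat.add_mul, h]

lemma uS_closed (i m : ℕ) : (uS i m : ℝ) = 4^m * ((2*i).choose i : ℝ) * ((m+i).choose i : ℝ) := by
  induction m with
  | zero => simp [uS, eC, gC]
  | succ m ih =>
    have h : ((m:ℝ)+1) * (uS i (m+1) : ℝ) = 4*((m:ℝ)+(i:ℝ)+1) * (uS i m : ℝ) := by
      exact_mod_cast uS_rec i m
    have hc : ((m:ℝ)+1) * ((i+m+1).choose i : ℝ) = ((i:ℝ)+(m:ℝ)+1) * ((i+m).choose i : ℝ) := by
      exact_mod_cast cchoose i m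
    have hm : ((m:ℝ)+1) ≠ 0 := by positivity
    have e1 : m+1+i = i+m+1 := by omega
    have e2 : m+i = i+m := by omega
    rw [ih, e2] at h
    rw [e1]
    apply mul_left_cancel₀ hm
    rw [h]
    linear_combination (-(4:ℝ)^(m+1) * ((2*i).choose i : ℝ)) * hc

/-! ### Double factorial facts -/

lemma fact2 : ∀ i : ℕ, (2*i)‼ * (2*i-1)‼ = (2*i)! := by
  intro i
  induction i with
  | zero => rfl
  | succ i ih =>
    have e1 : 2*(i+1) = 2*i+2 := by omega
    have e2 : 2*i+2-1 = 2*i+1 := by omega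
    rw [e1, e2, Nat.doubleFactorial_add_two,
      show (2*i+1)‼ = (2*i+1) * (2*i-1)‼ from by
        have := Nat.doubleFactorial_add_one (2*i); simpa using this]
    calc (2*i+2) * (2*i)‼ * ((2*i+1) * (2*i-1)‼)
        = (2*i+2) * ((2*i+1) * ((2*i)‼ * (2*i-1)‼)) := by ring
      _ = (2*i+2) * ((2*i+1) * (2*i)!) := by rw [ih]
      _ = (2*i+2)! := by
          rw [show (2*i+2) = (2*i+1)+1 from rfl, Nat.factorial_succ,
            show (2*i+1) = (2*i)+1 from rfl, Nat.factorial_succ]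

lemma df_binom (i : ℕ) : (2*i)‼ * ((2*i).choose i) = (2*i-1)‼ * 4^i := by
  apply Nat.eq_of_mul_eq_mul_left (Nat.doubleFactorial_pos (2*i))
  have h1 : (2*i)‼ = 2^i * i ! := Nat.doubleFactorial_two_mul i
  have h3 : (2*i).choose i * i ! * i ! = (2*i)! := by
    have := Nat.choose_mul_factorial_mul_factorial (show i ≤ 2*i by omega) (n := 2*i)
    simpa [show 2*i - i = i by omega] using this
  calc (2*i)‼ * ((2*i)‼ * ((2*i).choose i))
      = (2^i * i !) * ((2^i * i !) * ((2*i).choose i)) := by rw [h1]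
    _ = (2^i * 2^i) * ((2*i).choose i * i ! * i !) := by ring
    _ = 4^i * (2*i)! := by rw [h3, ← Nat.mul_pow]
    _ = (2*i)‼ * ((2*i-1)‼ * 4^i) := by rw [← mul_assoc, fact2 i]; ring

/-! ### Value at `x = 0` -/

lemma heunPoly_zero (n i : ℕ) (hi : i ≤ n) : heunPoly n i 0 = 1 := by
  have hsum : (∑ j ∈ Finset.range (n - i + 1),
      4 ^ j * ((i + j).choose i : ℝ) * ((2 * i + 2 * j).choose (i + j) : ℝ) *
        ((2 * n - 2 * i - 2 * j).choose (n - i - j) : ℝ) * ((0:ℝ) - 1 / 2) ^ (2 * j))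
      = (uS i (n-i) : ℝ) := by
    rw [uS]
    push_cast
    refine Finset.sum_congr rfl fun j hj => ?_
    have hj' : j ≤ n - i := Nat.lt_succ_iff.mp (Finset.mem_range.mp hj)
    have e1 : 2*n - 2*i - 2*j = 2*(n-i-j) := by omega
    have e2 : n - i - j = (n-i) - j := by omega
    have e3 : ((0:ℝ) - 1/2)^(2*j) = (1/4)^j := by
      rw [pow_mul]; norm_num
    rw [e1, e2, e3, eC, gC]
    push_cast
    have h44 : (4:ℝ)^j * (1/4)^j = 1 := by rw [← mul_pow]; norm_num
    linear_combination (((i+j).choose i : ℝ) * ((2*i+2*j).choose (i+j) : ℝ) *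
      ((2*(n-i-j)).choose (n-i-j) : ℝ)) * h44
  rw [heunPoly, hsum, uS_closed, Nat.sub_add_cancel hi]
  have h4 : (4:ℝ)^n = 4^(n-i) * 4^i := by
    rw [← pow_add, Nat.sub_add_cancel hi]
  have hch : (0:ℝ) < (n.choose i : ℝ) := by exact_mod_cast Nat.choose_pos hi
  have hdf : ((2*i-1)‼ : ℝ) ≠ 0 := by
    exact_mod_cast (Nat.doubleFactorial_pos _).ne'
  have hkey : ((2*i)‼ : ℝ) * ((2*i).choose i : ℝ) = ((2*i-1)‼ : ℝ) * 4^i := by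
    exact_mod_cast df_binom i
  rw [h4]
  field_simp
  linear_combination hkey

/-! ### The coefficients of the polynomial -/

noncomputable def Acoef (n i j : ℕ) : ℝ :=
  4 ^ j * ((i + j).choose i : ℝ) * ((2 * i + 2 * j).choose (i + j) : ℝ) *
    ((2 * n - 2 * i - 2 * j).choose (n - i - j) : ℝ)

noncomputable def Ccoef (n i : ℕ) : ℝ :=
  ((Nat.doubleFactorial (2 * i) : ℝ) / (Nat.doubleFactorial (2 * i - 1) : ℝ)) *
    ((4 : ℝ) ^ n)⁻¹ * ((n.choose i : ℝ))⁻¹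

lemma heunPoly_eq (n i : ℕ) : heunPoly n i =
    fun x => Ccoef n i * ∑ j ∈ Finset.range (n - i + 1), Acoef n i j * (x - 1/2)^(2*j) := rfl

lemma Acoef_eq {n i j : ℕ} (hi : i ≤ n) (hj : j ≤ n - i) :
    Acoef n i j = 4^j * (eC i j : ℝ) * (gC (n-i-j) : ℝ) := by
  have e1 : 2*n - 2*i - 2*j = 2*(n-i-j) := by omega
  rw [Acoef, e1, eC, gC]
  push_cast
  ring

lemma Arec {n i j : ℕ} (hi : i ≤ n) (hj : j < n - i) :
    Acoef n i j * (2*((j:ℝ)+(i:ℝ)-(n:ℝ))*(2*(j:ℝ)+2*(i:ℝ)+1)) =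
      Acoef n i (j+1) * (((j:ℝ)+1)*(2*((j:ℝ)+1)+2*(i:ℝ)-2*(n:ℝ)-1)/2) := by
  obtain ⟨k, hk⟩ : ∃ k, n - i - j = k + 1 := ⟨n - i - j - 1, by omega⟩
  have hk1 : n - i - (j+1) = k := by omega
  have hn' : n = i + j + k + 1 := by omega
  have hnr : (n:ℝ) = (i:ℝ) + (j:ℝ) + (k:ℝ) + 1 := by exact_mod_cast congrArg (Nat.cast : ℕ → ℝ) hn'
  rw [Acoef_eq hi hj.le, Acoef_eq hi (by omega), hk, hk1, hnr]
  have he : ((j:ℝ)+1) * (eC i (j+1) : ℝ) = 2*(2*(i:ℝ)+2*(j:ℝ)+1) * (eC i j : ℝ) := by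
    exact_mod_cast eC_succ i j
  have hg : ((k:ℝ)+1) * (gC (k+1) : ℝ) = 2*(2*(k:ℝ)+1) * (gC k : ℝ) := by
    exact_mod_cast gC_succ k
  push_cast
  linear_combination (2*(2*(k:ℝ)+1)*4^j*(gC k : ℝ)) * he - (2*(2*(j:ℝ)+2*(i:ℝ)+1)*4^j*(eC i j : ℝ)) * hg

lemma key (n i : ℕ) (hi : i ≤ n) (t : ℝ) :
    ∑ j ∈ Finset.range (n-i+1), Acoef n i j * (2*((j:ℝ)+(i:ℝ)-(n:ℝ))*(2*(j:ℝ)+2*(i:ℝ)+1)) * t^(2*j+2)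
      = ∑ j ∈ Finset.range (n-i+1), Acoef n i j * ((j:ℝ)*(2*(j:ℝ)+2*(i:ℝ)-2*(n:ℝ)-1)/2) * t^(2*j) := by
  rw [Finset.sum_range_succ,
    Finset.sum_range_succ' (fun j => Acoef n i j * ((j:ℝ)*(2*(j:ℝ)+2*(i:ℝ)-2*(n:ℝ)-1)/2) * t^(2*j)) (n-i)]
  have htop : Acoef n i (n-i) * (2*(((n-i:ℕ):ℝ)+(i:ℝ)-(n:ℝ))*(2*((n-i:ℕ):ℝ)+2*(i:ℝ)+1)) * t^(2*(n-i)+2) = 0 := by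
    have : ((n-i:ℕ):ℝ) = (n:ℝ) - (i:ℝ) := by
      rw [Nat.cast_sub hi]
    rw [this]
    ring_nf
  rw [htop]
  simp only [Nat.cast_zero, zero_mul, mul_zero, zero_div, pow_zero, add_zero, zero_add, mul_one]
  refine Finset.sum_congr rfl fun j hj => ?_
  have hj' : j < n - i := Finset.mem_range.mp hj
  have hrec := Arec hi hj'
  have hexp : 2*(j+1) = 2*j+2 := by omega
  rw [hexp]
  push_cast
  linear_combination (t^(2*j+2)) * hrec

/-! ### Derivatives -/

lemma hasDerivAt_term (a : ℝ) (m : ℕ) (x : ℝ) :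
    HasDerivAt (fun x : ℝ => a * (x - 1/2)^m) (a * (((m:ℕ):ℝ) * (x - 1/2)^(m-1))) x := by
  have h := (((hasDerivAt_id x).sub_const (1/2 : ℝ)).pow m).const_mul a
  simpa using h

lemma d1 (n i : ℕ) (x : ℝ) :
    HasDerivAt (heunPoly n i)
      (Ccoef n i * ∑ j ∈ Finset.range (n - i + 1),
        Acoef n i j * ((2*j : ℕ):ℝ) * (x - 1/2)^(2*j-1)) x := by
  rw [heunPoly_eq]
  have h := (HasDerivAt.fun_sum (fun j (_ : j ∈ Finset.range (n-i+1)) =>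
    hasDerivAt_term (Acoef n i j) (2*j) x)).const_mul (Ccoef n i)
  refine h.congr_deriv (congrArg _ ?_)
  exact Finset.sum_congr rfl fun j _ => by ring

lemma d2 (n i : ℕ) (x : ℝ) :
    HasDerivAt (fun x => Ccoef n i * ∑ j ∈ Finset.range (n - i + 1),
        Acoef n i j * ((2*j : ℕ):ℝ) * (x - 1/2)^(2*j-1))
      (Ccoef n i * ∑ j ∈ Finset.range (n - i + 1),
        Acoef n i j * ((2*j : ℕ):ℝ) * ((2*j-1 : ℕ):ℝ) * (x - 1/2)^(2*j-1-1)) x := by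
  have h := (HasDerivAt.fun_sum (fun j (_ : j ∈ Finset.range (n-i+1)) =>
    hasDerivAt_term (Acoef n i j * ((2*j : ℕ):ℝ)) (2*j-1) x)).const_mul (Ccoef n i)
  refine h.congr_deriv (congrArg _ ?_)
  exact Finset.sum_congr rfl fun j _ => by ring

lemma b1 (n i : ℕ) (x : ℝ) :
    (x - 1/2) * ∑ j ∈ Finset.range (n - i + 1),
        Acoef n i j * ((2*j : ℕ):ℝ) * (x - 1/2)^(2*j-1)
      = ∑ j ∈ Finset.range (n - i + 1), Acoef n i j * (2*(j:ℝ)) * (x - 1/2)^(2*j) := by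
  rw [Finset.mul_sum]
  refine Finset.sum_congr rfl fun j _ => ?_
  rcases j with _ | j
  · simp
  · rw [show 2*(j+1)-1 = 2*j+1 from by omega, show 2*(j+1) = (2*j+1)+1 from by omega, pow_succ]
    push_cast
    ring

lemma b2 (n i : ℕ) (x : ℝ) :
    (x - 1/2)^2 * ∑ j ∈ Finset.range (n - i + 1),
        Acoef n i j * ((2*j : ℕ):ℝ) * ((2*j-1 : ℕ):ℝ) * (x - 1/2)^(2*j-1-1)
      = ∑ j ∈ Finset.range (n - i + 1),
          Acoef n i j * (2*(j:ℝ)) * (2*(j:ℝ)-1) * (x - 1/2)^(2*j) := by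
  rw [Finset.mul_sum]
  refine Finset.sum_congr rfl fun j _ => ?_
  rcases j with _ | j
  · simp
  · rw [show 2*(j+1)-1-1 = 2*j from by omega, show 2*(j+1) = 2*j+2 from by omega,
      show (2*j+2-1 : ℕ) = 2*j+1 from by omega, pow_add]
    push_cast
    ring

lemma keyH (n i : ℕ) (hi : i ≤ n) (x : ℝ) :
    ((x-1/2)^2 - 1/4) * ((x-1/2)^2 * ∑ j ∈ Finset.range (n - i + 1),
        Acoef n i j * ((2*j : ℕ):ℝ) * ((2*j-1 : ℕ):ℝ) * (x - 1/2)^(2*j-1-1))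
    + ((4*(i:ℝ)-2*(n:ℝ)+2)*(x-1/2)^2 - ((i:ℝ)-(n:ℝ))/2) * ((x-1/2) * ∑ j ∈ Finset.range (n - i + 1),
        Acoef n i j * ((2*j : ℕ):ℝ) * (x - 1/2)^(2*j-1))
    + 2*((i:ℝ)-(n:ℝ))*(2*(i:ℝ)+1)*(x-1/2)^2 * ∑ j ∈ Finset.range (n - i + 1),
        Acoef n i j * (x - 1/2)^(2*j) = 0 := by
  rw [b2, b1]
  have hk := key n i hi (x - 1/2)
  have hcomb : ((x-1/2)^2 - 1/4) * (∑ j ∈ Finset.range (n - i + 1),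
        Acoef n i j * (2*(j:ℝ)) * (2*(j:ℝ)-1) * (x - 1/2)^(2*j))
      + ((4*(i:ℝ)-2*(n:ℝ)+2)*(x-1/2)^2 - ((i:ℝ)-(n:ℝ))/2) * (∑ j ∈ Finset.range (n - i + 1),
        Acoef n i j * (2*(j:ℝ)) * (x - 1/2)^(2*j))
      + 2*((i:ℝ)-(n:ℝ))*(2*(i:ℝ)+1)*(x-1/2)^2 * ∑ j ∈ Finset.range (n - i + 1),
        Acoef n i j * (x - 1/2)^(2*j)
      = (∑ j ∈ Finset.range (n-i+1),
          Acoef n i j * (2*((j:ℝ)+(i:ℝ)-(n:ℝ))*(2*(j:ℝ)+2*(i:ℝ)+1)) * (x-1/2)^(2*j+2))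
        - (∑ j ∈ Finset.range (n-i+1),
          Acoef n i j * ((j:ℝ)*(2*(j:ℝ)+2*(i:ℝ)-2*(n:ℝ)-1)/2) * (x-1/2)^(2*j)) := by
    rw [Finset.mul_sum, Finset.mul_sum, Finset.mul_sum, ← Finset.sum_sub_distrib,
      ← Finset.sum_add_distrib, ← Finset.sum_add_distrib]
    refine Finset.sum_congr rfl fun j _ => ?_
    rw [pow_add]
    ring
  rw [hcomb, hk, sub_self]

lemma assemble (i n x S0 S1 S2 c : ℝ) (hx0 : x ≠ 0) (hx1 : x-1 ≠ 0) (hxh : x-1/2 ≠ 0)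
    (H : ((x-1/2)^2 - 1/4) * ((x-1/2)^2 * S2)
      + ((4*i-2*n+2)*(x-1/2)^2 - (i-n)/2)*((x-1/2)*S1)
      + 2*(i-n)*(2*i+1)*(x-1/2)^2*S0 = 0) :
    c*S2 + ((i+1)/x + (i+1)/(x-1) + (2*i-2*n)/(x-1/2))*(c*S1)
      + (2*(i-n)*(2*i+1)*x - (i-n)*(2*i+1))/(x*(x-1)*(x-1/2))*(c*S0) = 0 := by
  have h2 : x*2-1 ≠ 0 := fun h => hxh (by linarith)
  apply mul_left_cancel₀ hxh
  rw [mul_zero]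
  field_simp [h2]
  apply mul_left_cancel₀ hxh
  linear_combination (2*c) * H

theorem stmt12 (n i : ℕ) (hi : i ≤ n) :
    heunPoly n i 0 = 1 ∧
      ∀ x : ℝ, x ∉ ({0, 1 / 2, 1} : Set ℝ) →
        deriv (deriv (heunPoly n i)) x +
            (((i : ℝ) + 1) / x + ((i : ℝ) + 1) / (x - 1) +
                (2 * (i : ℝ) - 2 * (n : ℝ)) / (x - 1 / 2)) * deriv (heunPoly n i) x +
            (2 * ((i : ℝ) - (n : ℝ)) * (2 * (i : ℝ) + 1) * x -
                ((i : ℝ) - (n : ℝ)) * (2 * (i : ℝ) + 1)) /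
              (x * (x - 1) * (x - 1 / 2)) * heunPoly n i x = 0 := by
  constructor
  · exact heunPoly_zero n i hi
  · intro x hx
    simp only [Set.mem_insert_iff, Set.mem_singleton_iff] at hx
    push_neg at hx
    obtain ⟨hx0, hxh, hx1⟩ := hx
    have hx1' : x - 1 ≠ 0 := sub_ne_zero.mpr hx1
    have hxh' : x - 1/2 ≠ 0 := sub_ne_zero.mpr hxh
    have hd1 : deriv (heunPoly n i) = fun y => Ccoef n i * ∑ j ∈ Finset.range (n - i + 1),
        Acoef n i j * ((2*j : ℕ):ℝ) * (y - 1/2)^(2*j-1) := funext fun y => (d1 n i y).deriv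
    rw [hd1, (d2 n i x).deriv, heunPoly_eq]
    beta_reduce
    exact assemble (i:ℝ) (n:ℝ) x _ _ _ (Ccoef n i) hx0 hx1' hxh' (keyH n i hi x)
end

section
/- For all natural numbers n ≥ 1 and j ≥ 0 and every real x, the j-th, (j+1)-st and (j+2)-nd derivatives of K_n satisfy x · K_n^{(j+2)}(x) + (4nx + j + 1) · K_n^{(j+1)}(x) + 2n(2j+1) · K_n^{(j)}(x) = 0, where K_n(x) := Σ_{k=0}^{∞} ( e^{−nx}·(nx)^k / k! )². -/
/-- `szaszK n x` is the sum of squares of the weights of the Szász–Mirakyan operator. -/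
noncomputable def szaszK (n : ℕ) (x : ℝ) : ℝ :=
  ∑' k : ℕ, (Real.exp (-((n : ℝ) * x)) * ((n : ℝ) * x) ^ k / (k.factorial : ℝ)) ^ 2

namespace Szasz13

/-- term of the `m`-th derivative series of `y ↦ ∑ y^k/(k!)²` -/
noncomputable def T (m k : ℕ) (y : ℝ) : ℝ :=
  (Nat.descFactorial k m : ℝ) * y ^ (k - m) / (Nat.factorial k : ℝ) ^ 2

noncomputable def D (m : ℕ) (y : ℝ) : ℝ := ∑' k, T m k y

lemma summable_aux (R : ℝ) (m : ℕ) :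
    Summable (fun k : ℕ => R ^ (k - m) / (Nat.factorial (k - m) : ℝ)) := by
  rw [← summable_nat_add_iff m]
  simpa using Real.summable_pow_div_factorial R

lemma T_bound {m k : ℕ} {y R : ℝ} (hR : 1 ≤ R) (hy : |y| ≤ R) :
    ‖T m k y‖ ≤ R ^ (k - m) / (Nat.factorial (k - m) : ℝ) := by
  have hR0 : (0:ℝ) ≤ R := le_trans zero_le_one hR
  rcases lt_or_ge k m with h | h
  · simp only [T, Nat.descFactorial_eq_zero_iff_lt.2 h, Nat.cast_zero, zero_mul, zero_div,
      norm_zero]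
    positivity
  · have h1 : ((k - m).factorial : ℝ) * (k.descFactorial m : ℝ) = (k.factorial : ℝ) := by
      exact_mod_cast congrArg (Nat.cast (R := ℝ)) (Nat.factorial_mul_descFactorial h)
    have hy0 : |y| ^ (k - m) ≤ R ^ (k - m) := pow_le_pow_left₀ (abs_nonneg y) hy _
    have hfk : (1:ℝ) ≤ (k.factorial : ℝ) := by
      exact_mod_cast Nat.one_le_iff_ne_zero.2 k.factorial_ne_zero
    have hfkm : (0:ℝ) < ((k - m).factorial : ℝ) := by positivity
    have hT : ‖T m k y‖ = (k.descFactorial m : ℝ) * |y| ^ (k - m) / (k.factorial : ℝ) ^ 2 := by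
      rw [T, Real.norm_eq_abs, abs_div, abs_mul, abs_pow, Nat.abs_cast, abs_pow, Nat.abs_cast]
    rw [hT, div_le_div_iff₀ (by positivity) hfkm]
    have h2 : (k.descFactorial m : ℝ) * |y| ^ (k - m) * ((k - m).factorial : ℝ)
        = |y| ^ (k - m) * (k.factorial : ℝ) := by rw [← h1]; ring
    rw [h2]
    have h3 : |y| ^ (k - m) * (k.factorial : ℝ) ≤ R ^ (k - m) * (k.factorial : ℝ) :=
      mul_le_mul_of_nonneg_right hy0 (by positivity)
    refine h3.trans ?_
    have : (k.factorial : ℝ) ≤ (k.factorial : ℝ) ^ 2 := by nlinarith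
    nlinarith [pow_nonneg hR0 (k - m)]

lemma hasDerivAt_T (m k : ℕ) (y : ℝ) :
    HasDerivAt (fun z => T m k z) (T (m + 1) k y) y := by
  have h : HasDerivAt (fun z : ℝ => z ^ (k - m)) ((k - m : ℕ) * y ^ (k - m - 1)) y :=
    hasDerivAt_pow (k - m) y
  have h2 : HasDerivAt (fun z => T m k z)
      ((Nat.descFactorial k m : ℝ) * ((k - m : ℕ) * y ^ (k - m - 1)) / (Nat.factorial k : ℝ) ^ 2)
      y := by
    unfold T
    exact (h.const_mul _).div_const _
  convert h2 using 1
  rw [T, Nat.descFactorial_succ, ← Nat.sub_sub]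
  push_cast
  ring

lemma summable_T (m : ℕ) (y : ℝ) : Summable fun k => T m k y :=
  Summable.of_norm_bounded (summable_aux (|y| + 1) m)
    (fun _ => T_bound (by linarith [abs_nonneg y]) (by linarith))

lemma hasDerivAt_D (m : ℕ) (y : ℝ) : HasDerivAt (D m) (D (m + 1) y) y := by
  have hy : y ∈ Metric.ball (0:ℝ) (|y| + 1) := by
    simp [Real.dist_eq]
  exact hasDerivAt_tsum_of_isPreconnected
    (summable_aux (|y| + 1) (m + 1))
    Metric.isOpen_ball
    (convex_ball (0:ℝ) (|y| + 1)).isPreconnected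
    (fun k z _ => hasDerivAt_T m k z)
    (fun k z hz => by
      have hz' : |z| < |y| + 1 := by simpa [Real.dist_eq] using hz
      exact T_bound (by linarith [abs_nonneg y]) hz'.le)
    hy (summable_T m y) hy

lemma contDiff_D (N : ℕ) : ∀ m, ContDiff ℝ (N : WithTop ℕ∞) (D m) := by
  induction N with
  | zero =>
    intro m
    rw [show ((0:ℕ) : WithTop ℕ∞) = 0 from rfl, contDiff_zero]
    exact Differentiable.continuous fun y => (hasDerivAt_D m y).differentiableAt
  | succ N ih =>
    intro m
    rw [show (((N+1):ℕ) : WithTop ℕ∞) = (N : WithTop ℕ∞) + 1 by push_cast; rfl,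
      contDiff_succ_iff_deriv]
    refine ⟨fun y => (hasDerivAt_D m y).differentiableAt, by simp, ?_⟩
    have hder : deriv (D m) = D (m + 1) := funext fun y => (hasDerivAt_D m y).deriv
    rw [hder]
    exact ih (m + 1)

/-- telescoping witness -/
noncomputable def dd (y : ℝ) (k : ℕ) : ℝ := (k : ℝ) ^ 2 * y ^ (k - 1) / (Nat.factorial k : ℝ) ^ 2

lemma dd_succ (y : ℝ) (k : ℕ) : dd y (k + 1) = T 0 k y := by
  have h : ((k + 1).factorial : ℝ) = (k + 1) * (k.factorial : ℝ) := by
    exact_mod_cast congrArg (Nat.cast (R := ℝ)) (Nat.factorial_succ k)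
  have hk : (k.factorial : ℝ) ≠ 0 := by positivity
  rw [dd, T, h]
  simp only [Nat.descFactorial_zero, Nat.cast_one, Nat.sub_zero, one_mul, Nat.add_sub_cancel]
  push_cast
  field_simp

lemma summable_dd (y : ℝ) : Summable (dd y) := by
  rw [← summable_nat_add_iff 1]
  simpa [dd_succ] using summable_T 0 y

lemma term_id (y : ℝ) (k : ℕ) :
    y * T 2 k y + T 1 k y - T 0 k y = dd y k - dd y (k + 1) := by
  rw [dd_succ]
  match k with
  | 0 => simp [T, dd, Nat.descFactorial]
  | 1 => simp [T, dd, Nat.descFactorial]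
  | (k + 2) =>
    have hk : (k.factorial : ℝ) ≠ 0 := by positivity
    simp only [T, dd, Nat.descFactorial_succ, Nat.descFactorial_zero, Nat.descFactorial_one,
      Nat.add_sub_cancel, Nat.succ_sub_one]
    have h2 : ((k + 2).factorial : ℝ) = (k + 2) * ((k + 1) * (k.factorial : ℝ)) := by
      push_cast [Nat.factorial_succ]; ring
    simp only [Nat.sub_zero]
    field_simp [h2]
    push_cast
    ring

lemma D_ode (y : ℝ) : y * D 2 y + D 1 y - D 0 y = 0 := by
  have h2 : Summable fun k => y * T 2 k y := (summable_T 2 y).mul_left y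
  have h1 := summable_T 1 y
  have h0 := summable_T 0 y
  have hd := summable_dd y
  have hd1 : Summable fun k => dd y (k + 1) := (summable_nat_add_iff 1).2 hd
  have key : (∑' k, (y * T 2 k y + T 1 k y - T 0 k y)) = dd y 0 := by
    have h : (∑' k, (y * T 2 k y + T 1 k y - T 0 k y)) = ∑' k, (dd y k - dd y (k + 1)) :=
      tsum_congr (term_id y)
    rw [h, Summable.tsum_sub hd hd1, Summable.tsum_eq_zero_add hd]
    ring
  have hdd0 : dd y 0 = 0 := by simp [dd]
  calc y * D 2 y + D 1 y - D 0 y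
      = (∑' k, (y * T 2 k y + T 1 k y - T 0 k y)) := by
        rw [D, D, D, ← tsum_mul_left, Summable.tsum_sub (h2.add h1) h0, Summable.tsum_add h2 h1]
    _ = 0 := by rw [key, hdd0]

noncomputable def K0 (n : ℕ) (x : ℝ) : ℝ :=
  Real.exp (-(2 * (n:ℝ) * x)) * D 0 (((n:ℝ) * x) ^ 2)
noncomputable def K1 (n : ℕ) (x : ℝ) : ℝ :=
  Real.exp (-(2 * (n:ℝ) * x)) *
    (-(2 * (n:ℝ)) * D 0 (((n:ℝ) * x) ^ 2) + 2 * (n:ℝ) ^ 2 * x * D 1 (((n:ℝ) * x) ^ 2))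
noncomputable def K2 (n : ℕ) (x : ℝ) : ℝ :=
  Real.exp (-(2 * (n:ℝ) * x)) *
    (4 * (n:ℝ) ^ 2 * D 0 (((n:ℝ) * x) ^ 2) +
      (-(8 * (n:ℝ) ^ 3 * x) + 2 * (n:ℝ) ^ 2) * D 1 (((n:ℝ) * x) ^ 2) +
      4 * (n:ℝ) ^ 4 * x ^ 2 * D 2 (((n:ℝ) * x) ^ 2))

lemma szaszK_eq (n : ℕ) : szaszK n = K0 n := by
  funext x
  rw [szaszK, K0, D, ← tsum_mul_left]
  refine tsum_congr fun k => ?_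
  rw [T]
  simp only [Nat.descFactorial_zero, Nat.cast_one, Nat.sub_zero, one_mul]
  rw [div_pow, mul_pow, ← Real.exp_nat_mul, ← pow_mul, mul_comm k 2, pow_mul]
  push_cast
  ring_nf

lemma hasDerivAt_inner (n : ℕ) (x : ℝ) :
    HasDerivAt (fun x : ℝ => ((n:ℝ) * x) ^ 2) (2 * (n:ℝ) ^ 2 * x) x := by
  have h := ((hasDerivAt_id x).const_mul ((n:ℝ))).pow 2
  exact h.congr_deriv (by simp [id]; ring)

lemma hasDerivAt_E (n : ℕ) (x : ℝ) :
    HasDerivAt (fun x : ℝ => Real.exp (-(2 * (n:ℝ) * x)))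
      (Real.exp (-(2 * (n:ℝ) * x)) * (-(2 * (n:ℝ)))) x := by
  have h : HasDerivAt (fun x : ℝ => -(2 * (n:ℝ) * x)) (-(2 * (n:ℝ))) x := by
    exact (((hasDerivAt_id' x).const_mul (2 * (n:ℝ))).neg).congr_deriv (by ring)
  exact h.exp

lemma hasDerivAt_Dcomp (n m : ℕ) (x : ℝ) :
    HasDerivAt (fun x : ℝ => D m (((n:ℝ) * x) ^ 2))
      (D (m + 1) (((n:ℝ) * x) ^ 2) * (2 * (n:ℝ) ^ 2 * x)) x :=
  by have := (hasDerivAt_D m (((n:ℝ) * x) ^ 2)).comp x (hasDerivAt_inner n x); exact this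

lemma hasDerivAt_K0 (n : ℕ) (x : ℝ) : HasDerivAt (K0 n) (K1 n x) x := by
  have h := (hasDerivAt_E n x).mul (hasDerivAt_Dcomp n 0 x)
  have h' : HasDerivAt (K0 n)
      (Real.exp (-(2 * (n:ℝ) * x)) * (-(2 * (n:ℝ))) * D 0 (((n:ℝ) * x) ^ 2) +
        Real.exp (-(2 * (n:ℝ) * x)) * (D 1 (((n:ℝ) * x) ^ 2) * (2 * (n:ℝ) ^ 2 * x))) x := h
  convert h' using 1
  rw [K1]; ring

lemma hasDerivAt_K1 (n : ℕ) (x : ℝ) : HasDerivAt (K1 n) (K2 n x) x := by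
  have hA : HasDerivAt
      (fun x : ℝ =>
        -(2 * (n:ℝ)) * D 0 (((n:ℝ) * x) ^ 2) + 2 * (n:ℝ) ^ 2 * x * D 1 (((n:ℝ) * x) ^ 2))
      (-(2 * (n:ℝ)) * (D 1 (((n:ℝ) * x) ^ 2) * (2 * (n:ℝ) ^ 2 * x)) +
        ((2 * (n:ℝ) ^ 2) * D 1 (((n:ℝ) * x) ^ 2) +
          2 * (n:ℝ) ^ 2 * x * (D 2 (((n:ℝ) * x) ^ 2) * (2 * (n:ℝ) ^ 2 * x)))) x := by
    refine HasDerivAt.add ((hasDerivAt_Dcomp n 0 x).const_mul _) ?_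
    have hc : HasDerivAt (fun x : ℝ => 2 * (n:ℝ) ^ 2 * x) (2 * (n:ℝ) ^ 2) x := by
      simpa using (hasDerivAt_id x).const_mul (2 * (n:ℝ) ^ 2)
    exact hc.mul (hasDerivAt_Dcomp n 1 x)
  have h := (hasDerivAt_E n x).mul hA
  refine h.congr_deriv ?_
  rw [K2]; ring

lemma base (n : ℕ) (x : ℝ) :
    x * iteratedDeriv 2 (szaszK n) x + (4 * (n:ℝ) * x + 1) * iteratedDeriv 1 (szaszK n) x +
      2 * (n:ℝ) * iteratedDeriv 0 (szaszK n) x = 0 := by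
  have hK1 : deriv (szaszK n) = K1 n := by
    rw [szaszK_eq]; exact funext fun z => (hasDerivAt_K0 n z).deriv
  have h2 : iteratedDeriv 2 (szaszK n) x = K2 n x := by
    rw [show (2:ℕ) = 1 + 1 from rfl, iteratedDeriv_succ, iteratedDeriv_one, hK1]
    exact (hasDerivAt_K1 n x).deriv
  have h1 : iteratedDeriv 1 (szaszK n) x = K1 n x := by rw [iteratedDeriv_one, hK1]
  have h0 : iteratedDeriv 0 (szaszK n) x = K0 n x := by rw [iteratedDeriv_zero, szaszK_eq]
  rw [h2, h1, h0, K0, K1, K2]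
  have hode := D_ode (((n:ℝ) * x) ^ 2)
  linear_combination (4 * (n:ℝ) ^ 2 * x * Real.exp (-(2 * (n:ℝ) * x))) * hode

lemma contDiff_szaszK (n N : ℕ) : ContDiff ℝ (N : WithTop ℕ∞) (szaszK n) := by
  rw [szaszK_eq]
  have h1 : ContDiff ℝ (N : WithTop ℕ∞) fun x : ℝ => -(2 * (n:ℝ) * x) :=
    (contDiff_const.mul contDiff_id).neg
  have h2 : ContDiff ℝ (N : WithTop ℕ∞) fun x : ℝ => ((n:ℝ) * x) ^ 2 :=
    (contDiff_const.mul contDiff_id).pow 2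
  exact ((Real.contDiff_exp.of_le le_top).comp h1).mul ((contDiff_D N 0).comp h2)

end Szasz13

theorem stmt13 (n : ℕ) (hn : 1 ≤ n) (j : ℕ) (x : ℝ) :
    x * iteratedDeriv (j + 2) (szaszK n) x +
        (4 * (n : ℝ) * x + (j : ℝ) + 1) * iteratedDeriv (j + 1) (szaszK n) x +
        2 * (n : ℝ) * (2 * (j : ℝ) + 1) * iteratedDeriv j (szaszK n) x = 0 := by
  induction j generalizing x with
  | zero =>
    have hb := Szasz13.base n x
    simp only [Nat.zero_add, Nat.cast_zero]
    linear_combination hb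
  | succ j ih =>
    have hder : ∀ (m : ℕ) (z : ℝ),
        HasDerivAt (iteratedDeriv m (szaszK n)) (iteratedDeriv (m + 1) (szaszK n) z) z := by
      intro m z
      have h1 : DifferentiableAt ℝ (iteratedDeriv m (szaszK n)) z :=
        ((Szasz13.contDiff_szaszK n (m + 1)).differentiable_iteratedDeriv m
          (by exact_mod_cast Nat.lt_succ_self m)) z
      rw [iteratedDeriv_succ]
      exact h1.hasDerivAt
    set F : ℝ → ℝ := fun z =>
      z * iteratedDeriv (j + 2) (szaszK n) z +
        (4 * (n : ℝ) * z + (j : ℝ) + 1) * iteratedDeriv (j + 1) (szaszK n) z +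
        2 * (n : ℝ) * (2 * (j : ℝ) + 1) * iteratedDeriv j (szaszK n) z with hFdef
    have hF0 : F = fun _ => 0 := funext fun z => ih z
    have hFd : HasDerivAt F
        (1 * iteratedDeriv (j + 2) (szaszK n) x + x * iteratedDeriv (j + 3) (szaszK n) x +
          (4 * (n : ℝ) * iteratedDeriv (j + 1) (szaszK n) x +
            (4 * (n : ℝ) * x + (j : ℝ) + 1) * iteratedDeriv (j + 2) (szaszK n) x) +
          2 * (n : ℝ) * (2 * (j : ℝ) + 1) * iteratedDeriv (j + 1) (szaszK n) x) x := by
      rw [hFdef]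
      have h1 := (hasDerivAt_id x).mul (hder (j + 2) x)
      have hlin : HasDerivAt (fun z : ℝ => 4 * (n:ℝ) * z + (j:ℝ) + 1) (4 * (n:ℝ)) x := by
        have := (((hasDerivAt_id x).const_mul (4 * (n:ℝ))).add_const ((j:ℝ))).add_const 1
        simpa using this
      have h2 := hlin.mul (hder (j + 1) x)
      have h3 := (hder j x).const_mul (2 * (n:ℝ) * (2 * (j:ℝ) + 1))
      have h := (h1.add h2).add h3
      exact h
    have hz : deriv F x = 0 := by rw [hF0]; simp
    have hexpr := hFd.deriv
    rw [hz] at hexpr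
    have hgoal : iteratedDeriv (j + 1 + 2) (szaszK n) x = iteratedDeriv (j + 3) (szaszK n) x := rfl
    have hgoal2 : iteratedDeriv (j + 1 + 1) (szaszK n) x = iteratedDeriv (j + 2) (szaszK n) x := rfl
    rw [hgoal, hgoal2]
    push_cast
    linear_combination -hexpr
end

section
/- For all natural numbers n ≥ 1 and j ≥ 0, the j-th derivative of K_n at 0 is given by K_n^{(j)}(0) = (−2n)^j · Σ_{i=0}^{⌊j/2⌋} C(j,2i) · C(2i,i) · 4^{−i}, where K_n(x) := Σ_{k=0}^{∞} ( e^{−nx}·(nx)^k / k! )². -/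
/-- Taylor coefficients of `szaszK n` at `0`. -/
noncomputable def stmt14c (n : ℕ) (m : ℕ) : ℝ :=
  ∑ k ∈ Finset.range (m / 2 + 1),
    (-(2 * (n : ℝ))) ^ (m - 2 * k) * (n : ℝ) ^ (2 * k) /
      (((m - 2 * k).factorial : ℝ) * ((k.factorial : ℝ)) ^ 2)

private lemma stmt14_nat_key {j k : ℕ} (h2k : 2 * k ≤ j) :
    j.choose (2 * k) * ((2 * k).choose k * (k.factorial * k.factorial)) *
      (j - 2 * k).factorial = j.factorial := by
  have h1 := Nat.choose_mul_factorial_mul_factorial h2k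
  have h2 := Nat.choose_mul_factorial_mul_factorial (show k ≤ 2 * k by omega)
  have hk : 2 * k - k = k := by omega
  rw [hk] at h2
  calc j.choose (2 * k) * ((2 * k).choose k * (k.factorial * k.factorial)) *
        (j - 2 * k).factorial
      = j.choose (2 * k) * ((2 * k).choose k * k.factorial * k.factorial) *
        (j - 2 * k).factorial := by ring
    _ = j.choose (2 * k) * (2 * k).factorial * (j - 2 * k).factorial := by rw [h2]
    _ = j.factorial := h1

private lemma stmt14_hasSum (n : ℕ) (y : ℝ) :
    HasSum (fun m => stmt14c n m * y ^ m) (szaszK n y) := by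
  set N : ℝ := (n : ℝ) with hN_def
  set f : ℕ → ℝ := fun p => (-(2 * N) * y) ^ p / p.factorial with hf_def
  set g : ℕ → ℝ :=
    fun m => if Even m then (N * y) ^ m / ((m / 2).factorial : ℝ) ^ 2 else 0 with hg_def
  have hinj : Function.Injective (fun k : ℕ => 2 * k) := fun a b h =>
    mul_left_cancel₀ two_ne_zero h
  have hg0 : ∀ m ∉ Set.range (fun k : ℕ => 2 * k), g m = 0 := by
    intro m hm
    have hodd : ¬ Even m := by
      simp only [Set.mem_range] at hm
      rintro ⟨t, ht⟩
      exact hm ⟨t, by show 2 * t = m; omega⟩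
    simp [hg_def, hodd]
  -- summability of the exponential series
  have hfs : Summable fun p => ‖f p‖ := by
    refine (Real.summable_pow_div_factorial |(-(2 * N) * y)|).congr fun p => ?_
    rw [hf_def]
    rw [Real.norm_eq_abs, abs_div, abs_pow, Nat.abs_cast]
  -- summability of the Bessel-type series
  have hGs : Summable (fun k : ℕ => ((N * y) ^ 2) ^ k / (k.factorial : ℝ)) :=
    Real.summable_pow_div_factorial _
  have hgs : Summable fun m => ‖g m‖ := by
    have h0' : ∀ m ∉ Set.range (fun k : ℕ => 2 * k), ‖g m‖ = 0 := by
      intro m hm; rw [hg0 m hm, norm_zero]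
    refine (Function.Injective.summable_iff hinj h0').mp ?_
    refine Summable.of_nonneg_of_le (fun k => norm_nonneg _) (fun k => ?_) hGs
    have hdiv : 2 * k / 2 = k := by omega
    have heven : Even (2 * k) := ⟨k, by omega⟩
    have hval : g (2 * k) = ((N * y) ^ 2) ^ k / (k.factorial : ℝ) ^ 2 := by
      simp only [hg_def]
      rw [if_pos heven, hdiv, pow_mul]
    have hk1 : (1 : ℝ) ≤ (k.factorial : ℝ) := by exact_mod_cast k.factorial_pos
    calc ‖(g ∘ fun k => 2 * k) k‖ = ‖g (2 * k)‖ := rfl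
      _ = ((N * y) ^ 2) ^ k / (k.factorial : ℝ) ^ 2 := by
          rw [hval, Real.norm_eq_abs, abs_of_nonneg (by positivity)]
      _ ≤ ((N * y) ^ 2) ^ k / (k.factorial : ℝ) := by
          apply div_le_div_of_nonneg_left (by positivity) (by linarith)
          nlinarith
  -- the sums of the two series
  have htf : ∑' p, f p = Real.exp (-(2 * N) * y) := by
    rw [Real.exp_eq_exp_ℝ, NormedSpace.exp_eq_tsum_div]
  have htg : ∑' m, g m = ∑' k : ℕ, (N * y) ^ (2 * k) / (k.factorial : ℝ) ^ 2 := by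
    have hsupp : Function.support g ⊆ Set.range (fun k : ℕ => 2 * k) := by
      intro m hm
      by_contra hmem
      exact hm (hg0 m hmem)
    rw [← Function.Injective.tsum_eq hinj hsupp]
    refine tsum_congr fun k => ?_
    have hdiv : 2 * k / 2 = k := by omega
    have heven : Even (2 * k) := ⟨k, by omega⟩
    simp only [hg_def]
    rw [if_pos heven, hdiv]
  -- expressing szaszK as the product of the two sums
  have hsz : szaszK n y
      = Real.exp (-(2 * N) * y) * ∑' k : ℕ, (N * y) ^ (2 * k) / (k.factorial : ℝ) ^ 2 := by
    rw [szaszK, ← tsum_mul_left]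
    refine tsum_congr fun k => ?_
    have hexp : Real.exp (-(N * y)) ^ 2 = Real.exp (-(2 * N) * y) := by
      rw [← Real.exp_nat_mul]
      congr 1
      push_cast
      ring
    have hpow : ((N * y) ^ k) ^ 2 = (N * y) ^ (2 * k) := by
      rw [← pow_mul, mul_comm k 2]
    rw [div_pow, mul_pow, hexp, hpow]
    ring
  -- Cauchy product
  have key := hasSum_sum_range_mul_of_summable_norm hfs hgs
  rw [htf, htg, ← hsz] at key
  have hterm : ∀ m, (∑ i ∈ Finset.range (m + 1), f i * g (m - i)) = stmt14c n m * y ^ m := by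
    intro m
    have hzero : ∀ i ∈ Finset.range (m + 1), f i * g (m - i) ≠ 0 → Even (m - i) := by
      intro i _ hne
      by_contra hodd
      simp [hg_def, hodd] at hne
    rw [← Finset.sum_filter_of_ne hzero, stmt14c, Finset.sum_mul]
    refine (Finset.sum_nbij' (fun k => m - 2 * k) (fun a => (m - a) / 2) ?_ ?_ ?_ ?_ ?_).symm
    · intro k hk
      simp only [Finset.mem_range] at hk
      simp only [Finset.mem_filter, Finset.mem_range]
      refine ⟨by omega, ⟨k, by omega⟩⟩
    · intro a ha
      simp only [Finset.mem_filter, Finset.mem_range] at ha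
      simp only [Finset.mem_range]
      omega
    · intro k hk
      simp only [Finset.mem_range] at hk
      show (m - (m - 2 * k)) / 2 = k
      omega
    · intro a ha
      simp only [Finset.mem_filter, Finset.mem_range] at ha
      obtain ⟨ha1, t, ht⟩ := ha
      show m - 2 * ((m - a) / 2) = a
      omega
    · intro k hk
      simp only [Finset.mem_range] at hk
      have h2k : 2 * k ≤ m := by omega
      have hsub : m - (m - 2 * k) = 2 * k := by omega
      have hdiv : 2 * k / 2 = k := by omega
      have heven : Even (2 * k) := ⟨k, by omega⟩
      rw [hsub]
      simp only [hf_def, hg_def, heven, if_true, hdiv]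
      have hy : y ^ (m - 2 * k) * y ^ (2 * k) = y ^ m := by
        rw [← pow_add, Nat.sub_add_cancel h2k]
      rw [mul_pow, mul_pow, ← hy]
      ring
  have hfun : (fun m => ∑ i ∈ Finset.range (m + 1), f i * g (m - i))
      = fun m => stmt14c n m * y ^ m := funext hterm
  rwa [hfun] at key

private lemma stmt14_bound (n : ℕ) (hn : 1 ≤ n) (m : ℕ) :
    |stmt14c n m| ≤ (m + 1) * (2 * (n : ℝ)) ^ m := by
  set N : ℝ := (n : ℝ) with hN_def
  have hN1 : (1 : ℝ) ≤ N := by rw [hN_def]; exact_mod_cast hn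
  have hNpos : (0 : ℝ) < N := by linarith
  rw [stmt14c]
  calc |∑ k ∈ Finset.range (m / 2 + 1),
      (-(2 * N)) ^ (m - 2 * k) * N ^ (2 * k) /
        (((m - 2 * k).factorial : ℝ) * ((k.factorial : ℝ)) ^ 2)|
      ≤ ∑ k ∈ Finset.range (m / 2 + 1),
          |(-(2 * N)) ^ (m - 2 * k) * N ^ (2 * k) /
            (((m - 2 * k).factorial : ℝ) * ((k.factorial : ℝ)) ^ 2)| :=
        Finset.abs_sum_le_sum_abs _ _
    _ ≤ ∑ _k ∈ Finset.range (m / 2 + 1), (2 * N) ^ m := by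
        refine Finset.sum_le_sum fun k hk => ?_
        simp only [Finset.mem_range] at hk
        have h2k : 2 * k ≤ m := by omega
        have hD1 : (1 : ℝ) ≤ ((m - 2 * k).factorial : ℝ) * ((k.factorial : ℝ)) ^ 2 := by
          have a1 : (1 : ℝ) ≤ ((m - 2 * k).factorial : ℝ) := by
            exact_mod_cast Nat.one_le_iff_ne_zero.mpr (m - 2 * k).factorial_ne_zero
          have a2 : (1 : ℝ) ≤ ((k.factorial : ℝ)) ^ 2 := by
            have : (1 : ℝ) ≤ (k.factorial : ℝ) := by
              exact_mod_cast Nat.one_le_iff_ne_zero.mpr k.factorial_ne_zero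
            nlinarith
          nlinarith
        have hnum : |(-(2 * N)) ^ (m - 2 * k) * N ^ (2 * k)| ≤ (2 * N) ^ m := by
          rw [abs_mul, abs_pow, abs_pow, abs_neg,
            abs_of_nonneg (by positivity : (0 : ℝ) ≤ 2 * N), abs_of_nonneg hNpos.le]
          calc (2 * N) ^ (m - 2 * k) * N ^ (2 * k)
              ≤ (2 * N) ^ (m - 2 * k) * (2 * N) ^ (2 * k) := by gcongr; linarith
            _ = (2 * N) ^ m := by rw [← pow_add, Nat.sub_add_cancel h2k]
        calc |(-(2 * N)) ^ (m - 2 * k) * N ^ (2 * k) /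
              (((m - 2 * k).factorial : ℝ) * ((k.factorial : ℝ)) ^ 2)|
            = |(-(2 * N)) ^ (m - 2 * k) * N ^ (2 * k)| /
              (((m - 2 * k).factorial : ℝ) * ((k.factorial : ℝ)) ^ 2) := by
              rw [abs_div, abs_of_nonneg (show (0:ℝ) ≤
                ((m - 2 * k).factorial : ℝ) * ((k.factorial : ℝ)) ^ 2 by positivity)]
          _ ≤ |(-(2 * N)) ^ (m - 2 * k) * N ^ (2 * k)| := by
              exact div_le_self (abs_nonneg _) hD1
          _ ≤ (2 * N) ^ m := hnum
    _ = ((m / 2 + 1 : ℕ) : ℝ) * (2 * N) ^ m := by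
        rw [Finset.sum_const, Finset.card_range, nsmul_eq_mul]
    _ ≤ (m + 1) * (2 * N) ^ m := by
        have h1 : ((m / 2 + 1 : ℕ) : ℝ) ≤ (m : ℝ) + 1 := by
          exact_mod_cast Nat.succ_le_succ (Nat.div_le_self m 2)
        have h2 : (0 : ℝ) ≤ (2 * N) ^ m := by positivity
        nlinarith

private lemma stmt14_ball (n : ℕ) (hn : 1 ≤ n) :
    HasFPowerSeriesOnBall (szaszK n) (FormalMultilinearSeries.ofScalars ℝ (stmt14c n)) 0
      (ENNReal.ofReal ((4 * (n : ℝ))⁻¹)) := by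
  set N : ℝ := (n : ℝ) with hN_def
  have hN1 : (1 : ℝ) ≤ N := by rw [hN_def]; exact_mod_cast hn
  have hNpos : (0 : ℝ) < N := by linarith
  have hrpos : (0 : ℝ) < (4 * N)⁻¹ := by positivity
  set r : NNReal := ⟨(4 * N)⁻¹, hrpos.le⟩ with hr_def
  have hcoe : ENNReal.ofReal ((4 * N)⁻¹) = (r : ENNReal) := by
    rw [hr_def, ENNReal.ofReal]
    congr 1
    exact Real.toNNReal_of_nonneg hrpos.le
  rw [hcoe]
  constructor
  · refine FormalMultilinearSeries.le_radius_of_bound _ 2 fun m => ?_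
    have hnorm : ‖FormalMultilinearSeries.ofScalars ℝ (stmt14c n) m‖ = |stmt14c n m| := by
      rw [FormalMultilinearSeries.ofScalars_norm, Real.norm_eq_abs]
    rw [hnorm]
    have hrc : ((r : ℝ)) = (4 * N)⁻¹ := rfl
    rw [hrc]
    have hb := stmt14_bound n hn m
    have hpow : (2 * N) ^ m * ((4 * N)⁻¹) ^ m = (1 / 2 : ℝ) ^ m := by
      rw [← mul_pow]
      congr 1
      field_simp
      ring
    have hmono : ((m : ℝ) + 1) ≤ 2 * 2 ^ m := by
      have h1 : (m : ℝ) < 2 ^ m := by exact_mod_cast (Nat.lt_two_pow_self (n := m))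
      have h2 : (1 : ℝ) ≤ 2 ^ m := one_le_pow₀ (by norm_num : (1:ℝ) ≤ 2)
      linarith
    calc |stmt14c n m| * ((4 * N)⁻¹) ^ m
        ≤ ((m : ℝ) + 1) * (2 * N) ^ m * ((4 * N)⁻¹) ^ m := by
          have : (0 : ℝ) ≤ ((4 * N)⁻¹) ^ m := by positivity
          nlinarith [abs_nonneg (stmt14c n m)]
      _ = ((m : ℝ) + 1) * (1 / 2) ^ m := by rw [mul_assoc, hpow]
      _ ≤ 2 := by
          have h2m : (0 : ℝ) < (2 : ℝ) ^ m := by positivity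
          rw [one_div, inv_pow, ← div_eq_mul_inv, div_le_iff₀ h2m]
          linarith
  · exact ENNReal.coe_pos.mpr (by exact_mod_cast hrpos)
  · intro y _
    rw [zero_add]
    simp only [FormalMultilinearSeries.ofScalars_apply_eq, smul_eq_mul]
    exact stmt14_hasSum n y

theorem stmt14 (n : ℕ) (hn : 1 ≤ n) (j : ℕ) :
    iteratedDeriv j (szaszK n) 0 =
      (-(2 * (n : ℝ))) ^ j *
        ∑ i ∈ Finset.range (j / 2 + 1),
          (j.choose (2 * i) : ℝ) * ((2 * i).choose i : ℝ) / 4 ^ i := by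
  set N : ℝ := (n : ℝ) with hN_def
  have hball := stmt14_ball n hn
  have h := hball.factorial_smul (1 : ℝ) j
  rw [iteratedDeriv_eq_iteratedFDeriv, ← h, FormalMultilinearSeries.ofScalars_apply_eq]
  rw [one_pow, smul_eq_mul, mul_one, nsmul_eq_mul]
  rw [stmt14c, Finset.mul_sum, Finset.mul_sum]
  refine Finset.sum_congr rfl fun k hk => ?_
  simp only [Finset.mem_range] at hk
  have h2k : 2 * k ≤ j := by omega
  have hsplit : (-(2 * N)) ^ j = (-(2 * N)) ^ (j - 2 * k) * (4 ^ k * N ^ (2 * k)) := by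
    have h1 : (-(2 * N)) ^ (2 * k) = 4 ^ k * N ^ (2 * k) := by
      calc (-(2 * N)) ^ (2 * k) = ((-(2 * N)) ^ 2) ^ k := by rw [pow_mul]
        _ = (4 * N ^ 2) ^ k := by congr 1; ring
        _ = 4 ^ k * N ^ (2 * k) := by rw [mul_pow, ← pow_mul]
    rw [← h1, ← pow_add, Nat.sub_add_cancel h2k]
  have key : (j.factorial : ℝ)
      = (j.choose (2 * k) : ℝ) * ((2 * k).choose k : ℝ) *
        (((j - 2 * k).factorial : ℝ) * ((k.factorial : ℝ)) ^ 2) := by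
    have hnat := stmt14_nat_key h2k
    have hcast := congrArg (Nat.cast : ℕ → ℝ) hnat.symm
    push_cast at hcast
    rw [hcast]
    ring
  have hf1 : ((j - 2 * k).factorial : ℝ) ≠ 0 := by
    exact_mod_cast (j - 2 * k).factorial_ne_zero
  have hf2 : ((k.factorial : ℝ)) ≠ 0 := by exact_mod_cast k.factorial_ne_zero
  have hf3 : (4 : ℝ) ^ k ≠ 0 := by positivity
  rw [key, hsplit]
  field_simp
  ring
end

section
/- For every natural number n ≥ 1, the function u(x) := K_n′(x) / (2n(x−1)) satisfies u(0) = 1 and, for every real x ∉ {0, 1}, the confluent Heun differential equation u″(x) + ( 4n + 2/x + 2/(x−1) ) · u′(x) + ( 4n·(5/2)·x − (6n−2) ) / ( x(x−1) ) · u(x) = 0, where K_n(x) := Σ_{k=0}^{∞} ( e^{−nx}·(nx)^k / k! )². -/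
open Real

noncomputable def J0 (t : ℝ) : ℝ := ∑' k : ℕ, t ^ (2*k) / (k.factorial : ℝ)^2
noncomputable def J1 (t : ℝ) : ℝ := ∑' k : ℕ, (2*(k:ℝ)) * t ^ (2*k-1) / (k.factorial : ℝ)^2
noncomputable def J2 (t : ℝ) : ℝ :=
  ∑' k : ℕ, (2*(k:ℝ)*(2*(k:ℝ)-1)) * t ^ (2*k-2) / (k.factorial : ℝ)^2
noncomputable def J3 (t : ℝ) : ℝ :=
  ∑' k : ℕ, (2*(k:ℝ)*(2*(k:ℝ)-1)*(2*(k:ℝ)-2)) * t ^ (2*k-3) / (k.factorial : ℝ)^2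

lemma genbound {R y c : ℝ} {k m : ℕ} (hR : 1 ≤ R) (hy : |y| ≤ R) (hm : m ≤ 2*k)
    (hc : |c| ≤ 64 * 8^k) :
    ‖c * y ^ m / (k.factorial:ℝ)^2‖ ≤ 64 * (8*R^2)^k / k.factorial := by
  have hf1 : (1:ℝ) ≤ (k.factorial:ℝ) := by exact_mod_cast k.factorial_pos
  have habs : ‖c * y ^ m / (k.factorial:ℝ)^2‖ = |c| * |y|^m / (k.factorial:ℝ)^2 := by
    rw [Real.norm_eq_abs, abs_div, abs_mul, abs_pow, abs_of_nonneg (by positivity : (0:ℝ) ≤ (k.factorial:ℝ)^2)]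
  rw [habs]
  have h1 : |y|^m ≤ R^(2*k) :=
    (pow_le_pow_left₀ (abs_nonneg y) hy m).trans (pow_le_pow_right₀ hR hm)
  have h2 : (k.factorial:ℝ) ≤ (k.factorial:ℝ)^2 := by nlinarith
  calc |c| * |y| ^ m / (k.factorial:ℝ)^2 ≤ (64*8^k) * R^(2*k) / (k.factorial:ℝ) := by
        gcongr
    _ = 64 * (8*R^2)^k / k.factorial := by rw [pow_mul, mul_pow]; ring

lemma sumU (R : ℝ) : Summable (fun k : ℕ => 64 * (8*R^2)^k / k.factorial) := by
  simpa [mul_div_assoc] using (Real.summable_pow_div_factorial (8*R^2)).mul_left 64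

lemma cb0 (k : ℕ) : |(1:ℝ)| ≤ 64 * 8^k := by
  have : (1:ℝ) ≤ 8^k := one_le_pow₀ (by norm_num)
  rw [abs_one]; nlinarith

lemma twopow (k : ℕ) : (k:ℝ) ≤ 2^k := by exact_mod_cast (Nat.lt_two_pow_self (n := k)).le

lemma pows (k : ℕ) : ((2:ℝ)^k)^3 = 8^k := by
  rw [← pow_mul, pow_mul']; norm_num

lemma cb1 (k : ℕ) : |2*(k:ℝ)| ≤ 64 * 8^k := by
  have h1 := twopow k
  have h2 : (1:ℝ) ≤ 2^k := one_le_pow₀ (by norm_num)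
  have h3 := pows k
  have h0 : (0:ℝ) ≤ k := Nat.cast_nonneg k
  rw [abs_of_nonneg (by positivity)]
  nlinarith [sq_nonneg ((2:ℝ)^k)]

lemma cb2 (k : ℕ) : |2*(k:ℝ)*(2*(k:ℝ)-1)| ≤ 64 * 8^k := by
  have h1 := twopow k
  have h2 : (1:ℝ) ≤ 2^k := one_le_pow₀ (by norm_num)
  have h3 := pows k
  have h0 : (0:ℝ) ≤ k := Nat.cast_nonneg k
  have e1 : |2*(k:ℝ)| = 2*k := abs_of_nonneg (by positivity)
  have e2 : |2*(k:ℝ)-1| ≤ 2*(k:ℝ)+1 := abs_le.mpr ⟨by linarith, by linarith⟩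
  calc |2*(k:ℝ)*(2*(k:ℝ)-1)| = |2*(k:ℝ)| * |2*(k:ℝ)-1| := abs_mul _ _
    _ ≤ (2*(k:ℝ)) * (2*(k:ℝ)+1) := by rw [e1]; exact mul_le_mul_of_nonneg_left e2 (by positivity)
    _ ≤ 64 * 8^k := by nlinarith [sq_nonneg ((2:ℝ)^k)]

lemma cb3 (k : ℕ) : |2*(k:ℝ)*(2*(k:ℝ)-1)*(2*(k:ℝ)-2)| ≤ 64 * 8^k := by
  have h1 := twopow k
  have h2 : (1:ℝ) ≤ 2^k := one_le_pow₀ (by norm_num)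
  have h3 := pows k
  have h0 : (0:ℝ) ≤ k := Nat.cast_nonneg k
  have e1 : |2*(k:ℝ)| = 2*k := abs_of_nonneg (by positivity)
  have e2 : |2*(k:ℝ)-1| ≤ 2*(k:ℝ)+1 := abs_le.mpr ⟨by linarith, by linarith⟩
  have e3 : |2*(k:ℝ)-2| ≤ 2*(k:ℝ)+2 := abs_le.mpr ⟨by linarith, by linarith⟩
  calc |2*(k:ℝ)*(2*(k:ℝ)-1)*(2*(k:ℝ)-2)| = |2*(k:ℝ)| * |2*(k:ℝ)-1| * |2*(k:ℝ)-2| := by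
        rw [abs_mul, abs_mul]
    _ ≤ (2*(k:ℝ)+2) * (2*(k:ℝ)+2) * (2*(k:ℝ)+2) := by
        have g1 : |2*(k:ℝ)| ≤ 2*(k:ℝ)+2 := by rw [e1]; linarith
        have g2 : |2*(k:ℝ)-1| ≤ 2*(k:ℝ)+2 := e2.trans (by linarith)
        have g3 : |2*(k:ℝ)-2| ≤ 2*(k:ℝ)+2 := e3
        exact mul_le_mul (mul_le_mul g1 g2 (abs_nonneg _) (by positivity)) g3 (abs_nonneg _)
          (by positivity)
    _ ≤ 64 * 8^k := by
        have hb : (0:ℝ) ≤ 2*(k:ℝ)+2 := by positivity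
        have hc4 : 2*(k:ℝ)+2 ≤ 4*2^k := by nlinarith
        calc (2*(k:ℝ)+2) * (2*(k:ℝ)+2) * (2*(k:ℝ)+2)
            ≤ (4*(2:ℝ)^k) * (4*(2:ℝ)^k) * (4*(2:ℝ)^k) :=
              mul_le_mul (mul_le_mul hc4 hc4 hb (by positivity)) hc4 hb (by positivity)
          _ = 64 * 8^k := by rw [← pows k]; ring

lemma cb4 (k : ℕ) : |4*(k:ℝ)^2| ≤ 64 * 8^k := by
  have h1 := twopow k
  have h2 : (1:ℝ) ≤ 2^k := one_le_pow₀ (by norm_num)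
  have h3 := pows k
  have h0 : (0:ℝ) ≤ k := Nat.cast_nonneg k
  rw [abs_of_nonneg (by positivity)]
  nlinarith [sq_nonneg ((2:ℝ)^k)]

lemma Rfact (t : ℝ) : (1:ℝ) ≤ |t| + 1 ∧ |t| ≤ |t| + 1 := ⟨by linarith [abs_nonneg t], by linarith⟩

lemma sum0 {R t : ℝ} (hR : 1 ≤ R) (ht : |t| ≤ R) :
    Summable (fun k : ℕ => t ^ (2*k) / (k.factorial : ℝ)^2) := by
  apply Summable.of_norm_bounded (sumU R)
  intro k
  simpa [one_mul] using genbound hR ht (le_refl (2*k)) (cb0 k)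

lemma sum1 {R t : ℝ} (hR : 1 ≤ R) (ht : |t| ≤ R) :
    Summable (fun k : ℕ => (2*(k:ℝ)) * t ^ (2*k-1) / (k.factorial : ℝ)^2) := by
  apply Summable.of_norm_bounded (sumU R)
  intro k
  exact genbound hR ht (by omega) (cb1 k)

lemma sum2 {R t : ℝ} (hR : 1 ≤ R) (ht : |t| ≤ R) :
    Summable (fun k : ℕ => (2*(k:ℝ)*(2*(k:ℝ)-1)) * t ^ (2*k-2) / (k.factorial : ℝ)^2) := by
  apply Summable.of_norm_bounded (sumU R)
  intro k
  exact genbound hR ht (by omega) (cb2 k)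

lemma sum3 {R t : ℝ} (hR : 1 ≤ R) (ht : |t| ≤ R) :
    Summable (fun k : ℕ => (2*(k:ℝ)*(2*(k:ℝ)-1)*(2*(k:ℝ)-2)) * t ^ (2*k-3) / (k.factorial : ℝ)^2) := by
  apply Summable.of_norm_bounded (sumU R)
  intro k
  exact genbound hR ht (by omega) (cb3 k)

lemma memball {t y : ℝ} (hy : y ∈ Metric.ball (0:ℝ) (|t|+1)) : |y| ≤ |t| + 1 := by
  rw [Metric.mem_ball, Real.dist_eq, sub_zero] at hy
  exact hy.le

lemma tmem (t : ℝ) : t ∈ Metric.ball (0:ℝ) (|t|+1) := by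
  rw [Metric.mem_ball, Real.dist_eq, sub_zero]
  linarith

lemma J0_deriv (t : ℝ) : HasDerivAt J0 (J1 t) t := by
  set R := |t| + 1 with hRdef
  have hR : (1:ℝ) ≤ R := (Rfact t).1
  apply hasDerivAt_tsum_of_isPreconnected (sumU R) Metric.isOpen_ball
    (convex_ball (0:ℝ) R).isPreconnected
    (g := fun (k : ℕ) (y : ℝ) => y ^ (2*k) / (k.factorial : ℝ)^2)
    (g' := fun (k : ℕ) (y : ℝ) => (2*(k:ℝ)) * y ^ (2*k-1) / (k.factorial : ℝ)^2)
    (y₀ := t)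
  · intro k y _
    have h := (hasDerivAt_pow (2*k) y).div_const ((k.factorial : ℝ)^2)
    refine h.congr_deriv ?_
    push_cast
    ring
  · intro k y hy
    exact genbound hR (memball hy) (by omega) (cb1 k)
  · exact tmem t
  · exact sum0 hR (Rfact t).2
  · exact tmem t

lemma J1_deriv (t : ℝ) : HasDerivAt J1 (J2 t) t := by
  set R := |t| + 1 with hRdef
  have hR : (1:ℝ) ≤ R := (Rfact t).1
  apply hasDerivAt_tsum_of_isPreconnected (sumU R) Metric.isOpen_ball
    (convex_ball (0:ℝ) R).isPreconnected
    (g := fun (k : ℕ) (y : ℝ) => (2*(k:ℝ)) * y ^ (2*k-1) / (k.factorial : ℝ)^2)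
    (g' := fun (k : ℕ) (y : ℝ) => (2*(k:ℝ)*(2*(k:ℝ)-1)) * y ^ (2*k-2) / (k.factorial : ℝ)^2)
    (y₀ := t)
  · intro k y _
    have h := ((hasDerivAt_pow (2*k-1) y).const_mul (2*(k:ℝ))).div_const ((k.factorial : ℝ)^2)
    refine h.congr_deriv ?_
    rcases k with _ | j
    · norm_num
    · have e1 : 2*(j+1)-1 = 2*j+1 := by omega
      have e2 : 2*(j+1)-2 = 2*j := by omega
      have e3 : 2*j+1-1 = 2*j := by omega
      rw [e1, e2, e3]
      push_cast
      ring
  · intro k y hy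
    exact genbound hR (memball hy) (by omega) (cb2 k)
  · exact tmem t
  · exact sum1 hR (Rfact t).2
  · exact tmem t

lemma J2_deriv (t : ℝ) : HasDerivAt J2 (J3 t) t := by
  set R := |t| + 1 with hRdef
  have hR : (1:ℝ) ≤ R := (Rfact t).1
  apply hasDerivAt_tsum_of_isPreconnected (sumU R) Metric.isOpen_ball
    (convex_ball (0:ℝ) R).isPreconnected
    (g := fun (k : ℕ) (y : ℝ) => (2*(k:ℝ)*(2*(k:ℝ)-1)) * y ^ (2*k-2) / (k.factorial : ℝ)^2)
    (g' := fun (k : ℕ) (y : ℝ) => (2*(k:ℝ)*(2*(k:ℝ)-1)*(2*(k:ℝ)-2)) * y ^ (2*k-3) / (k.factorial : ℝ)^2)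
    (y₀ := t)
  · intro k y _
    have h := ((hasDerivAt_pow (2*k-2) y).const_mul (2*(k:ℝ)*(2*(k:ℝ)-1))).div_const
      ((k.factorial : ℝ)^2)
    refine h.congr_deriv ?_
    rcases k with _ | j
    · norm_num
    · rcases j with _ | i
      · norm_num
      · have e1 : 2*(i+1+1)-2 = 2*i+2 := by omega
        have e2 : 2*i+2-1 = 2*i+1 := by omega
        have e3 : 2*(i+1+1)-3 = 2*i+1 := by omega
        rw [e1, e2, e3]
        push_cast
        ring
  · intro k y hy
    exact genbound hR (memball hy) (by omega) (cb3 k)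
  · exact tmem t
  · exact sum2 hR (Rfact t).2
  · exact tmem t

lemma sumh {R t : ℝ} (hR : 1 ≤ R) (ht : |t| ≤ R) :
    Summable (fun k : ℕ => 4*(k:ℝ)^2 * t ^ (2*k-1) / (k.factorial : ℝ)^2) := by
  apply Summable.of_norm_bounded (sumU R)
  intro k
  exact genbound hR ht (by omega) (cb4 k)

lemma odeE0 (t : ℝ) : t * J2 t + J1 t = 4 * t * J0 t := by
  have hR : (1:ℝ) ≤ |t| + 1 := (Rfact t).1
  have ht : |t| ≤ |t| + 1 := (Rfact t).2
  have S0 := sum0 hR ht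
  have S1 := sum1 hR ht
  have S2 := sum2 hR ht
  have Sh := sumh hR ht
  have h1 : t * J2 t = ∑' k : ℕ, t * ((2*(k:ℝ)*(2*(k:ℝ)-1)) * t ^ (2*k-2) / (k.factorial : ℝ)^2) :=
    (tsum_mul_left).symm
  have h2 : t * J2 t + J1 t
      = ∑' k : ℕ, (t * ((2*(k:ℝ)*(2*(k:ℝ)-1)) * t ^ (2*k-2) / (k.factorial : ℝ)^2)
          + (2*(k:ℝ)) * t ^ (2*k-1) / (k.factorial : ℝ)^2) := by
    rw [h1]
    exact (Summable.tsum_add (S2.mul_left t) S1).symm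
  have h3 : ∀ k : ℕ, (t * ((2*(k:ℝ)*(2*(k:ℝ)-1)) * t ^ (2*k-2) / (k.factorial : ℝ)^2)
          + (2*(k:ℝ)) * t ^ (2*k-1) / (k.factorial : ℝ)^2)
      = 4*(k:ℝ)^2 * t ^ (2*k-1) / (k.factorial : ℝ)^2 := by
    intro k
    rcases k with _ | j
    · norm_num
    · have e1 : 2*(j+1)-2 = 2*j := by omega
      have e2 : 2*(j+1)-1 = 2*j+1 := by omega
      rw [e1, e2]
      push_cast
      ring
  rw [h2, tsum_congr h3, Summable.tsum_eq_zero_add Sh]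
  have h4 : ∀ k : ℕ, 4*((k+1:ℕ):ℝ)^2 * t ^ (2*(k+1)-1) / ((k+1).factorial : ℝ)^2
      = 4 * t * (t ^ (2*k) / (k.factorial : ℝ)^2) := by
    intro k
    have e1 : 2*(k+1)-1 = 2*k+1 := by omega
    have hf : ((k.factorial : ℝ)) ≠ 0 := Nat.cast_ne_zero.mpr k.factorial_ne_zero
    have hk : ((k:ℝ)+1) ≠ 0 := by positivity
    rw [e1, Nat.factorial_succ]
    push_cast
    field_simp
    ring
  rw [tsum_congr h4, tsum_mul_left, J0]
  ring

lemma odeE1 (t : ℝ) : t * J3 t + 2 * J2 t = 4 * J0 t + 4 * t * J1 t := by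
  have hF : (fun s => s * J2 s + J1 s - 4 * s * J0 s) = (fun _ : ℝ => (0:ℝ)) := by
    funext s
    rw [odeE0 s]
    ring
  have h1 : HasDerivAt (fun s : ℝ => s * J2 s + J1 s - 4 * s * J0 s)
      ((1 * J2 t + t * J3 t) + J2 t - (4 * J0 t + 4 * t * J1 t)) t := by
    have ha := (hasDerivAt_id t).mul (J2_deriv t)
    have hb := ha.add (J1_deriv t)
    have hd : HasDerivAt (fun s : ℝ => 4 * s * J0 s) (4 * J0 t + 4 * t * J1 t) t := by
      have := ((hasDerivAt_id t).const_mul (4:ℝ)).mul (J0_deriv t)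
      refine this.congr_deriv ?_
      simp only [id_eq]
      ring
    exact (hb.sub hd)
  have h2 : HasDerivAt (fun s : ℝ => s * J2 s + J1 s - 4 * s * J0 s) 0 t := by
    rw [hF]
    exact hasDerivAt_const t 0
  have := h1.unique h2
  linarith

lemma J0_zero : J0 0 = 1 := by
  rw [J0]
  rw [tsum_eq_single 0 (by intro k hk; simp [zero_pow (by omega : 2*k ≠ 0)])]
  norm_num

lemma J1_zero : J1 0 = 0 := by
  rw [J1]
  have : ∀ k : ℕ, (2*(k:ℝ)) * (0:ℝ) ^ (2*k-1) / (k.factorial : ℝ)^2 = 0 := by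
    intro k
    rcases k with _ | j
    · norm_num
    · rw [zero_pow (by omega : 2*(j+1)-1 ≠ 0)]
      ring
  rw [tsum_congr this]
  exact tsum_zero

noncomputable def Af (n : ℕ) (x : ℝ) : ℝ :=
  Real.exp (-(2*((n:ℝ)*x))) * (J1 ((n:ℝ)*x) - 2 * J0 ((n:ℝ)*x))

noncomputable def Bf (n : ℕ) (x : ℝ) : ℝ :=
  (n:ℝ) * Real.exp (-(2*((n:ℝ)*x))) * (J2 ((n:ℝ)*x) - 4 * J1 ((n:ℝ)*x) + 4 * J0 ((n:ℝ)*x))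

noncomputable def Cf (n : ℕ) (x : ℝ) : ℝ :=
  (n:ℝ)^2 * Real.exp (-(2*((n:ℝ)*x))) *
    (J3 ((n:ℝ)*x) - 6 * J2 ((n:ℝ)*x) + 12 * J1 ((n:ℝ)*x) - 8 * J0 ((n:ℝ)*x))

lemma szasz_closed (n : ℕ) (x : ℝ) :
    szaszK n x = Real.exp (-(2*((n:ℝ)*x))) * J0 ((n:ℝ)*x) := by
  rw [szaszK, J0, ← tsum_mul_left]
  apply tsum_congr
  intro k
  have h1 : (((n:ℝ)*x)^k)^2 = ((n:ℝ)*x)^(2*k) := (pow_mul' _ 2 k).symm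
  have h2 : Real.exp (-((n:ℝ)*x)) ^ 2 = Real.exp (-(2*((n:ℝ)*x))) := by
    rw [sq, ← Real.exp_add]
    congr 1
    ring
  rw [div_pow, mul_pow, h1, h2]
  ring

lemma lin_deriv (n : ℕ) (x : ℝ) : HasDerivAt (fun y : ℝ => (n:ℝ)*y) (n:ℝ) x := by
  simpa using (hasDerivAt_id x).const_mul (n:ℝ)

lemma exp_deriv (n : ℕ) (x : ℝ) :
    HasDerivAt (fun y : ℝ => Real.exp (-(2*((n:ℝ)*y))))
      (Real.exp (-(2*((n:ℝ)*x))) * (-(2*(n:ℝ)))) x := by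
  have h2 : HasDerivAt (fun y : ℝ => -(2*((n:ℝ)*y))) (-(2*(n:ℝ))) x :=
    ((lin_deriv n x).const_mul 2).neg
  exact h2.exp

lemma Af_deriv (n : ℕ) (x : ℝ) : HasDerivAt (Af n) (Bf n x) x := by
  have hJ1 : HasDerivAt (fun y : ℝ => J1 ((n:ℝ)*y)) (J2 ((n:ℝ)*x) * (n:ℝ)) x :=
    (J1_deriv _).comp x (lin_deriv n x)
  have hJ0 : HasDerivAt (fun y : ℝ => J0 ((n:ℝ)*y)) (J1 ((n:ℝ)*x) * (n:ℝ)) x :=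
    (J0_deriv _).comp x (lin_deriv n x)
  have h := (exp_deriv n x).mul (hJ1.sub (hJ0.const_mul 2))
  refine h.congr_deriv ?_
  simp only [Bf, Pi.sub_apply]
  ring

lemma Bf_deriv (n : ℕ) (x : ℝ) : HasDerivAt (Bf n) (Cf n x) x := by
  have hJ2 : HasDerivAt (fun y : ℝ => J2 ((n:ℝ)*y)) (J3 ((n:ℝ)*x) * (n:ℝ)) x :=
    (J2_deriv _).comp x (lin_deriv n x)
  have hJ1 : HasDerivAt (fun y : ℝ => J1 ((n:ℝ)*y)) (J2 ((n:ℝ)*x) * (n:ℝ)) x :=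
    (J1_deriv _).comp x (lin_deriv n x)
  have hJ0 : HasDerivAt (fun y : ℝ => J0 ((n:ℝ)*y)) (J1 ((n:ℝ)*x) * (n:ℝ)) x :=
    (J0_deriv _).comp x (lin_deriv n x)
  have hne : HasDerivAt (fun y : ℝ => (n:ℝ) * Real.exp (-(2*((n:ℝ)*y))))
      ((Real.exp (-(2*((n:ℝ)*x))) * (-(2*(n:ℝ)))) * (n:ℝ)) x := by
    simpa [mul_comm] using (exp_deriv n x).const_mul (n:ℝ)
  have h := hne.mul ((hJ2.sub (hJ1.const_mul 4)).add (hJ0.const_mul 4))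
  have hBf : Bf n = fun y : ℝ => (n:ℝ) * Real.exp (-(2*((n:ℝ)*y))) *
      (J2 ((n:ℝ)*y) - 4 * J1 ((n:ℝ)*y) + 4 * J0 ((n:ℝ)*y)) := rfl
  rw [hBf]
  refine h.congr_deriv ?_
  simp only [Cf, Pi.sub_apply, Pi.add_apply]
  ring

lemma K_deriv (n : ℕ) (x : ℝ) : HasDerivAt (szaszK n) ((n:ℝ) * Af n x) x := by
  have hJ0 : HasDerivAt (fun y : ℝ => J0 ((n:ℝ)*y)) (J1 ((n:ℝ)*x) * (n:ℝ)) x :=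
    (J0_deriv _).comp x (lin_deriv n x)
  have h := (exp_deriv n x).mul hJ0
  have hfun : szaszK n = fun y => Real.exp (-(2*((n:ℝ)*y))) * J0 ((n:ℝ)*y) :=
    funext fun y => szasz_closed n y
  rw [hfun]
  refine h.congr_deriv ?_
  simp only [Af]
  ring

theorem stmt15 (n : ℕ) (hn : 1 ≤ n) :
    let u : ℝ → ℝ := fun x => deriv (szaszK n) x / (2 * (n : ℝ) * (x - 1))
    u 0 = 1 ∧
      ∀ x : ℝ, x ∉ ({0, 1} : Set ℝ) →
        deriv (deriv u) x +
            (4 * (n : ℝ) + 2 / x + 2 / (x - 1)) * deriv u x +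
            (4 * (n : ℝ) * (5 / 2) * x - (6 * (n : ℝ) - 2)) / (x * (x - 1)) * u x = 0 := by
  intro u
  have hn0 : (n:ℝ) ≠ 0 := Nat.cast_ne_zero.mpr (by omega)
  have hderivK : deriv (szaszK n) = fun x => (n:ℝ) * Af n x :=
    funext fun x => (K_deriv n x).deriv
  have hu : u = fun x => Af n x / (2*(x-1)) := by
    funext x
    show deriv (szaszK n) x / (2 * (n:ℝ) * (x-1)) = _
    rw [hderivK, show (2 * (n:ℝ) * (x-1)) = (n:ℝ) * (2*(x-1)) by ring]
    exact mul_div_mul_left _ _ hn0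
  constructor
  · rw [hu]
    simp only [Af]
    norm_num [J0_zero, J1_zero]
  · intro x hx
    simp only [Set.mem_insert_iff, Set.mem_singleton_iff] at hx
    push_neg at hx
    obtain ⟨hx0, hx1⟩ := hx
    have hx1' : x - 1 ≠ 0 := sub_ne_zero.mpr hx1
    set U1 : ℝ → ℝ := fun y => (Bf n y * (y-1) - Af n y) / (2*(y-1)^2) with hU1def
    have hu' : ∀ y : ℝ, y ≠ 1 → HasDerivAt u (U1 y) y := by
      intro y hy
      have hy' : y - 1 ≠ 0 := sub_ne_zero.mpr hy
      have hden : HasDerivAt (fun z : ℝ => 2*(z-1)) 2 y := by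
        simpa using ((hasDerivAt_id y).sub_const 1).const_mul (2:ℝ)
      have h := (Af_deriv n y).div hden (mul_ne_zero two_ne_zero hy')
      rw [hu]
      refine h.congr_deriv ?_
      rw [hU1def]
      field_simp
    have hdu : ∀ y : ℝ, y ≠ 1 → deriv u y = U1 y := fun y hy => (hu' y hy).deriv
    have hefeq : deriv u =ᶠ[nhds x] U1 := by
      filter_upwards [isOpen_ne.mem_nhds hx1] with y hy
      exact hdu y hy
    have hU1' : HasDerivAt U1
        ((Cf n x * (x-1)^2 - 2*(Bf n x * (x-1) - Af n x)) / (2*(x-1)^3)) x := by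
      have h1 : HasDerivAt (fun y : ℝ => Bf n y * (y - 1)) (Cf n x * (x-1) + Bf n x) x := by
        refine ((Bf_deriv n x).mul ((hasDerivAt_id x).sub_const 1)).congr_deriv ?_
        simp
      have hnum := h1.sub (Af_deriv n x)
      have hden2 : HasDerivAt (fun y : ℝ => 2*(y-1)^2) (2*(2*(x-1))) x := by
        simpa using (((hasDerivAt_id x).sub_const 1).pow 2).const_mul (2:ℝ)
      have h := hnum.div hden2 (by intro hc; apply hx1'; nlinarith [sq_nonneg (x-1)])
      refine h.congr_deriv ?_
      simp only [Pi.sub_apply]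
      field_simp
      ring
    have e1 : deriv (deriv u) x = (Cf n x * (x-1)^2 - 2*(Bf n x * (x-1) - Af n x)) / (2*(x-1)^3) := by
      rw [hefeq.deriv_eq]
      exact hU1'.deriv
    have e2 : deriv u x = U1 x := hdu x hx1
    have e3 : u x = Af n x / (2*(x-1)) := by rw [hu]
    rw [e1, e2, e3, hU1def]
    have key : x * (Cf n x * (x-1)^2 - 2*(Bf n x * (x-1) - Af n x))
        + (4*(n:ℝ)*x^2 - 4*(n:ℝ)*x + 4*x - 2) * (Bf n x * (x-1) - Af n x)
        + (10*(n:ℝ)*x - 6*(n:ℝ) + 2) * (x-1) * (Af n x) = 0 := by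
      have hE0 := odeE0 ((n:ℝ)*x)
      have hE1 := odeE1 ((n:ℝ)*x)
      simp only [Af, Bf, Cf]
      linear_combination ((n:ℝ)*(x-1)^2 * Real.exp (-(2*((n:ℝ)*x)))) * hE1
        - (2*(n:ℝ)*(x-1)^2 * Real.exp (-(2*((n:ℝ)*x)))) * hE0
    have key2 : x * Cf n x + (4*(n:ℝ)*x + 2) * Bf n x + 6*(n:ℝ) * Af n x = 0 := by
      have hE0 := odeE0 ((n:ℝ)*x)
      have hE1 := odeE1 ((n:ℝ)*x)
      simp only [Af, Bf, Cf]
      linear_combination ((n:ℝ) * Real.exp (-(2*((n:ℝ)*x)))) * hE1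
        - (2*(n:ℝ) * Real.exp (-(2*((n:ℝ)*x)))) * hE0
    field_simp
    linear_combination 2*(x-1)^2 * key2
end
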